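/- Let λ and μ be positive roots with λ ⪯ μ. Then λ_s ≤ μ_s for every s ∈ B, i.e., every coordinate of λ in the basis (α_s) is at most the corresponding coordinate of μ. -/

import Mathlib

open Real

variable {B : Type*}

/-- The pairing constant `⟨α_s, α_t⟩` of the standard bilinear form:
`-cos (π / M s t)` if `M s t ≠ 0`, and `-1` if `M s t = 0` (i.e. `m_{s,t} = ∞`). -/
noncomputable def pairing (M : CoxeterMatrix B) (s t : B) : ℝ :=
  if M s t = 0 then -1 else -Real.cos (Real.pi / (M s t : ℝ))

/-- The standard symmetric bilinear form on `V = B → ℝ`. -/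
noncomputable def form [Fintype B] (M : CoxeterMatrix B) (v w : B → ℝ) : ℝ :=
  ∑ s, ∑ t, v s * w t * pairing M s t

/-- The simple root `α_s`, i.e. the standard basis vector at `s`. -/
noncomputable def sroot [DecidableEq B] (s : B) : B → ℝ := Pi.single s 1

/-- `λ` is a root: `λ = ρ(w) α_s` for some `w ∈ W`, `s ∈ B`. -/
def IsRoot [DecidableEq B] (M : CoxeterMatrix B)
    (ρ : M.Group →* Module.End ℝ (B → ℝ)) (lam : B → ℝ) : Prop :=
  ∃ (w : M.Group) (s : B), ρ w (sroot s) = lam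

/-- `λ` is positive: all coordinates are nonnegative. -/
def IsPos (lam : B → ℝ) : Prop := ∀ s, 0 ≤ lam s

/-- `λ` is negative: all coordinates are nonpositive. -/
def IsNeg (lam : B → ℝ) : Prop := ∀ s, lam s ≤ 0

/-- `λ` is a positive root. -/
def IsPosRoot [DecidableEq B] (M : CoxeterMatrix B)
    (ρ : M.Group →* Module.End ℝ (B → ℝ)) (lam : B → ℝ) : Prop :=
  IsRoot M ρ lam ∧ IsPos lam

/-- `λ` dominates `μ`: for every `w ∈ W`, if `ρ(w) μ` is positive then so is `ρ(w) λ`. -/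
def Dominates (M : CoxeterMatrix B)
    (ρ : M.Group →* Module.End ℝ (B → ℝ)) (lam mu : B → ℝ) : Prop :=
  ∀ w : M.Group, IsPos (ρ w mu) → IsPos (ρ w lam)

/-- `λ` is a minimal root: a positive root dominating no positive root other than itself. -/
def IsMinimal [DecidableEq B] (M : CoxeterMatrix B)
    (ρ : M.Group →* Module.End ℝ (B → ℝ)) (lam : B → ℝ) : Prop :=
  IsPosRoot M ρ lam ∧
    ∀ mu, IsPosRoot M ρ mu → Dominates M ρ lam mu → mu = lam

/-- The depth `δ(λ)` of a positive root:
the least Coxeter length of a `w ∈ W` with `ρ(w⁻¹) λ` negative. -/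
noncomputable def depth (M : CoxeterMatrix B)
    (ρ : M.Group →* Module.End ℝ (B → ℝ)) (lam : B → ℝ) : ℕ :=
  sInf {n | ∃ w : M.Group, IsNeg (ρ w⁻¹ lam) ∧ M.toCoxeterSystem.length w = n}

/-- The partial order `λ ⪯ μ` on positive roots:
`μ = ρ(w) λ` for some `w` with `δ(μ) = ℓ(w) + δ(λ)`. -/
def PLE (M : CoxeterMatrix B)
    (ρ : M.Group →* Module.End ℝ (B → ℝ)) (lam mu : B → ℝ) : Prop :=
  ∃ w : M.Group, mu = ρ w lam ∧
    depth M ρ mu = M.toCoxeterSystem.length w + depth M ρ lam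

/-- The Coxeter graph of `M`: distinct `s`, `t` are adjacent iff `M s t ≥ 3` or `M s t = 0`. -/
def coxGraph (M : CoxeterMatrix B) : SimpleGraph B where
  Adj s t := s ≠ t ∧ (M s t = 0 ∨ 3 ≤ M s t)
  symm := by
    constructor
    intro s t h
    exact ⟨h.1.symm, by rw [M.symmetric t s]; exact h.2⟩
  loopless := by constructor; intro s h; exact h.1 rfl

/-- The support of a vector `λ ∈ V`. -/
def supp (lam : B → ℝ) : Set B := {s | lam s ≠ 0}


section Aux
set_option linter.unusedSectionVars false

variable [DecidableEq B] [Fintype B] (M : CoxeterMatrix B)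

lemma pairing_self (s : B) : pairing M s s = 1 := by
  simp [pairing, M.diagonal s]

lemma pairing_comm (s t : B) : pairing M s t = pairing M t s := by
  simp [pairing, M.symmetric s t]

lemma form_sroot (v : B → ℝ) (s : B) :
    form M v (sroot s) = ∑ t, v t * pairing M t s := by
  unfold form sroot
  refine Finset.sum_congr rfl fun t _ => ?_
  rw [Finset.sum_eq_single s]
  · simp
  · intro b _ hb; simp [Pi.single_apply, hb]
  · intro h; exact absurd (Finset.mem_univ s) h

lemma form_sroot_sroot (s t : B) :
    form M (sroot s) (sroot t) = pairing M s t := by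
  rw [form_sroot]
  rw [Finset.sum_eq_single s]
  · simp [sroot]
  · intro b _ hb; simp [sroot, Pi.single_apply, hb]
  · intro h; exact absurd (Finset.mem_univ s) h

lemma form_combo (s t : B) (a b : ℝ) (x : B) :
    form M (a • sroot s + b • sroot t) (sroot x)
      = a * pairing M s x + b * pairing M t x := by
  rw [form_sroot]
  have : ∀ u : B, (a • sroot s + b • sroot t) u * pairing M u x
      = a * ((sroot s) u * pairing M u x) + b * ((sroot t) u * pairing M u x) := by
    intro u; simp [Pi.add_apply, Pi.smul_apply, smul_eq_mul]; ring
  rw [Finset.sum_congr rfl fun u _ => this u, Finset.sum_add_distrib,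
    ← Finset.mul_sum, ← Finset.mul_sum, ← form_sroot, ← form_sroot,
    form_sroot_sroot, form_sroot_sroot]

end Aux

section Aux2

set_option linter.unusedSectionVars false

variable [DecidableEq B] [Fintype B] (M : CoxeterMatrix B)
  (ρ : M.Group →* Module.End ℝ (B → ℝ))
  (hρ : ∀ (s : B) (v : B → ℝ),
      ρ (M.simple s) v = v - (2 * form M v (sroot s)) • sroot s)

lemma rho_mul_apply (w w' : M.Group) (v : B → ℝ) :
    ρ (w * w') v = ρ w (ρ w' v) := by
  rw [map_mul]; rfl

lemma rho_inv_apply (w : M.Group) (v : B → ℝ) : ρ w⁻¹ (ρ w v) = v := by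
  rw [← rho_mul_apply, inv_mul_cancel, map_one]; rfl

include hρ

lemma rho_simple_sroot_self (s : B) : ρ (M.simple s) (sroot s) = -sroot s := by
  rw [hρ, form_sroot_sroot, pairing_self]
  ext x
  simp [sroot, Pi.single_apply]
  split_ifs <;> ring

lemma M_ne_one {s t : B} (hst : s ≠ t) : M s t ≠ 1 := by
  intro h1
  have hrel : M.simple s * M.simple t = 1 := by
    have := M.toCoxeterSystem.simple_mul_simple_pow s t
    rw [CoxeterMatrix.toCoxeterSystem_simple] at this
    rwa [h1, pow_one] at this
  have happ : ρ (M.simple s) (ρ (M.simple t) (sroot t)) = sroot t := by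
    rw [← rho_mul_apply, hrel, map_one]; rfl
  rw [rho_simple_sroot_self M ρ hρ, map_neg, hρ] at happ
  rw [form_sroot_sroot] at happ
  have hpair : pairing M t s = 1 := by
    simp [pairing, M.symmetric t s, h1]
  rw [hpair] at happ
  have := congrFun happ t
  simp [sroot, Pi.single_apply, hst.symm] at this
  linarith

lemma pairing_nonpos {s t : B} (hst : s ≠ t) : pairing M s t ≤ 0 := by
  unfold pairing
  by_cases h0 : M s t = 0
  · simp [h0]
  · simp only [h0, if_false, neg_nonpos]
    have h2 : 2 ≤ M s t := by
      have := M_ne_one M ρ hρ hst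
      omega
    have hm : (2:ℝ) ≤ (M s t : ℝ) := by exact_mod_cast h2
    have hmpos : (0:ℝ) < (M s t : ℝ) := by linarith
    have hd : Real.pi / (M s t : ℝ) ≤ Real.pi / 2 :=
      div_le_div_of_nonneg_left Real.pi_pos.le (by norm_num) hm
    have hd0 : 0 < Real.pi / (M s t : ℝ) := by positivity
    apply Real.cos_nonneg_of_mem_Icc
    constructor
    · linarith [Real.pi_pos]
    · exact hd

lemma rho_s_combo (s t : B) (a b : ℝ) :
    ρ (M.simple s) (a • sroot s + b • sroot t)
      = (-a - 2*b*pairing M s t) • sroot s + b • sroot t := by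
  rw [hρ, form_combo M s t a b, pairing_self, pairing_comm M t s]
  ext x
  simp [sroot, Pi.single_apply, smul_eq_mul]
  split_ifs <;> ring

lemma rho_t_combo (s t : B) (a b : ℝ) :
    ρ (M.simple t) (a • sroot s + b • sroot t)
      = a • sroot s + (-b - 2*a*pairing M s t) • sroot t := by
  rw [hρ, form_combo M s t a b, pairing_self]
  ext x
  simp [sroot, Pi.single_apply, smul_eq_mul]
  split_ifs <;> ring

end Aux2

section Useq

noncomputable def useq (c : ℝ) : ℕ → ℝ
  | 0 => 0
  | 1 => 1
  | (j+2) => -2*c*useq c (j+1) - useq c j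

lemma useq_neg_one (j : ℕ) : useq (-1) j = j := by
  induction j using Nat.strong_induction_on with
  | _ j ih =>
    match j with
    | 0 => simp [useq]
    | 1 => simp [useq]
    | (j+2) =>
      rw [useq, ih (j+1) (by omega), ih j (by omega)]
      push_cast
      ring

lemma useq_sin (θ : ℝ) (j : ℕ) :
    Real.sin θ * useq (-Real.cos θ) j = Real.sin (j * θ) := by
  induction j using Nat.strong_induction_on with
  | _ j ih =>
    match j with
    | 0 => simp [useq]
    | 1 => simp [useq]
    | (j+2) =>
      rw [useq, mul_sub, show Real.sin θ * (-2*(-Real.cos θ) * useq (-Real.cos θ) (j+1))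
          = (2*Real.cos θ) * (Real.sin θ * useq (-Real.cos θ) (j+1)) by ring,
        ih (j+1) (by omega), ih j (by omega)]
      have h1 : ((j:ℝ)+2) * θ = ((j:ℝ)+1) * θ + θ := by ring
      have h2 : (j:ℝ) * θ = ((j:ℝ)+1) * θ - θ := by ring
      push_cast
      rw [h1, h2, Real.sin_add, Real.sin_sub]
      ring

end Useq

section Aux3

set_option linter.unusedSectionVars false

variable [DecidableEq B] [Fintype B] (M : CoxeterMatrix B)
  (ρ : M.Group →* Module.End ℝ (B → ℝ))
  (hρ : ∀ (s : B) (v : B → ℝ),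
      ρ (M.simple s) v = v - (2 * form M v (sroot s)) • sroot s)

include hρ

lemma useq_pairing_nonneg {s t : B} (hst : s ≠ t) {j : ℕ}
    (hj : M s t = 0 ∨ j ≤ M s t) : 0 ≤ useq (pairing M s t) j := by
  by_cases h0 : M s t = 0
  · rw [pairing, if_pos h0, useq_neg_one]
    positivity
  · have h2 : 2 ≤ M s t := by have := M_ne_one M ρ hρ hst; omega
    have hjm : j ≤ M s t := by
      rcases hj with h | h
      · exact absurd h h0
      · exact h
    rw [pairing, if_neg h0]
    set θ := Real.pi / (M s t : ℝ) with hθ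
    have hmpos : (0:ℝ) < (M s t : ℝ) := by
      have : 0 < M s t := by omega
      exact_mod_cast this
    have hθpos : 0 < θ := by positivity
    have hθle : θ ≤ Real.pi / 2 := by
      apply div_le_div_of_nonneg_left Real.pi_pos.le (by norm_num)
      exact_mod_cast h2
    have hsin : 0 < Real.sin θ := by
      apply Real.sin_pos_of_pos_of_lt_pi hθpos
      linarith [Real.pi_pos]
    have hkey : Real.sin θ * useq (-Real.cos θ) j = Real.sin (j * θ) := useq_sin θ j
    have hjθ : (j:ℝ) * θ ≤ Real.pi := by
      rw [hθ, mul_div_assoc', div_le_iff₀ hmpos]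
      nlinarith [Real.pi_pos, (by exact_mod_cast hjm : (j:ℝ) ≤ (M s t : ℝ))]
    have hsinj : 0 ≤ Real.sin ((j:ℝ) * θ) := by
      apply Real.sin_nonneg_of_nonneg_of_le_pi
      · positivity
      · exact hjθ
    nlinarith [hkey, hsin, hsinj]

lemma rho_altWord {s t : B} (hst : s ≠ t) (k : ℕ) :
    ρ (M.toCoxeterSystem.wordProd (CoxeterSystem.alternatingWord s t k)) (sroot s)
      = if Even k
        then useq (pairing M s t) (k+1) • sroot s + useq (pairing M s t) k • sroot t
        else useq (pairing M s t) k • sroot s + useq (pairing M s t) (k+1) • sroot t := by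
  set c := pairing M s t with hc
  induction k with
  | zero =>
    simp only [CoxeterSystem.alternatingWord, CoxeterSystem.wordProd_nil, map_one]
    rw [if_pos (by exact Even.zero)]
    show sroot s = useq c 1 • sroot s + useq c 0 • sroot t
    rw [show useq c 1 = 1 from rfl, show useq c 0 = 0 from rfl]
    ext x; simp
  | succ k ih =>
    rw [CoxeterSystem.alternatingWord_succ', CoxeterSystem.wordProd_cons,
      rho_mul_apply, ih]
    by_cases hk : Even k
    · rw [if_pos hk, if_pos hk, if_neg (by simp [Nat.even_add_one, hk])]
      have := rho_t_combo M ρ hρ s t (useq c (k+1)) (useq c k)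
      rw [CoxeterMatrix.toCoxeterSystem_simple, this]
      congr 1
      rw [show useq c (k+2) = -2*c*useq c (k+1) - useq c k from rfl]
      congr 1
      ring
    · rw [if_neg hk, if_neg hk, if_pos (by simp [Nat.even_add_one, hk])]
      have := rho_s_combo M ρ hρ s t (useq c k) (useq c (k+1))
      rw [CoxeterMatrix.toCoxeterSystem_simple, this]
      congr 1
      rw [show useq c (k+2) = -2*c*useq c (k+1) - useq c k from rfl]
      congr 1
      ring

end Aux3

section Aux4

set_option linter.unusedSectionVars false
set_option linter.unusedVariables false

open CoxeterSystem

variable [DecidableEq B] [Fintype B] (M : CoxeterMatrix B)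
  (ρ : M.Group →* Module.End ℝ (B → ℝ))
  (hρ : ∀ (s : B) (v : B → ℝ),
      ρ (M.simple s) v = v - (2 * form M v (sroot s)) • sroot s)

lemma not_isReduced_alt_concat (i i' : B) (n : ℕ) :
    ¬ M.toCoxeterSystem.IsReduced (alternatingWord i i' (n+1) ++ [i']) := by
  intro h
  have hπ : M.toCoxeterSystem.wordProd (alternatingWord i i' (n+1) ++ [i'])
      = M.toCoxeterSystem.wordProd (alternatingWord i' i n) := by
    rw [CoxeterSystem.wordProd_append, alternatingWord_succ,
      CoxeterSystem.wordProd_concat]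
    have : M.toCoxeterSystem.wordProd [i'] = M.toCoxeterSystem.simple i' := by
      simp [CoxeterSystem.wordProd_cons]
    rw [this, mul_assoc, CoxeterSystem.simple_mul_simple_self, mul_one]
  unfold CoxeterSystem.IsReduced at h
  rw [hπ] at h
  have hle := M.toCoxeterSystem.length_wordProd_le (alternatingWord i' i n)
  rw [CoxeterSystem.length_alternatingWord] at hle
  simp only [List.length_append, List.length_singleton,
    CoxeterSystem.length_alternatingWord] at h
  omega

lemma alt_classify (s t : B) : ∀ ω : List B, M.toCoxeterSystem.IsReduced ω →
    (∀ x ∈ ω, x = s ∨ x = t) →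
    ω = alternatingWord s t ω.length ∨ ω = alternatingWord t s ω.length := by
  intro ω
  induction ω using List.reverseRecOn with
  | nil => intro _ _; left; rfl
  | append_singleton ω₀ x ih =>
    intro hred hmem
    have hred₀ : M.toCoxeterSystem.IsReduced ω₀ := by
      have := hred.take ω₀.length
      rwa [List.take_left] at this
    have hmem₀ : ∀ y ∈ ω₀, y = s ∨ y = t := fun y hy => hmem y (by simp [hy])
    have hx := hmem x (by simp)
    have hlen : (ω₀ ++ [x]).length = ω₀.length + 1 := by simp
    rcases ih hred₀ hmem₀ with h₀ | h₀
    · rcases hx with hx | hx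
      · subst hx
        right
        simp only [List.length_append, List.length_singleton]
        rw [alternatingWord_succ, ← h₀, List.concat_eq_append]
      · by_cases hn : ω₀.length = 0
        · left
          have he : ω₀ = [] := List.length_eq_zero_iff.mp hn
          subst he
          rw [hx]
          rfl
        · obtain ⟨j, hj⟩ : ∃ j, ω₀.length = j + 1 := ⟨ω₀.length - 1, by omega⟩
          exfalso
          have h2 : ω₀ ++ [x] = alternatingWord s t (j+1) ++ [t] := by
            rw [hx, ← hj, ← h₀]
          rw [h2] at hred
          exact not_isReduced_alt_concat M s t j hred
    · rcases hx with hx | hx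
      · by_cases hn : ω₀.length = 0
        · right
          have he : ω₀ = [] := List.length_eq_zero_iff.mp hn
          subst he
          rw [hx]
          rfl
        · obtain ⟨j, hj⟩ : ∃ j, ω₀.length = j + 1 := ⟨ω₀.length - 1, by omega⟩
          exfalso
          have h2 : ω₀ ++ [x] = alternatingWord t s (j+1) ++ [s] := by
            rw [hx, ← hj, ← h₀]
          rw [h2] at hred
          exact not_isReduced_alt_concat M t s j hred
      · subst hx
        left
        simp only [List.length_append, List.length_singleton]
        rw [alternatingWord_succ, ← h₀, List.concat_eq_append]

include hρ

lemma dihedral_lemma {s t : B} (hst : s ≠ t) (ω : List B)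
    (hmem : ∀ x ∈ ω, x = s ∨ x = t) (hred : M.toCoxeterSystem.IsReduced ω)
    (hlen : M.toCoxeterSystem.length (M.toCoxeterSystem.wordProd ω * M.simple s)
      = M.toCoxeterSystem.length (M.toCoxeterSystem.wordProd ω) + 1) :
    ∃ a b : ℝ, 0 ≤ a ∧ 0 ≤ b ∧
      ρ (M.toCoxeterSystem.wordProd ω) (sroot s) = a • sroot s + b • sroot t := by
  set cs := M.toCoxeterSystem with hcs
  have hℓω : cs.length (cs.wordProd ω) = ω.length := hred
  by_cases h0 : ω.length = 0
  · -- ω = []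
    have : ω = [] := List.length_eq_zero_iff.mp h0
    subst this
    refine ⟨1, 0, by norm_num, le_refl 0, ?_⟩
    rw [CoxeterSystem.wordProd_nil, map_one]
    show sroot s = (1:ℝ) • sroot s + (0:ℝ) • sroot t
    ext x; simp
  · rcases alt_classify M s t ω hred hmem with hω | hω
    · -- ω = alt s t k, ends with t
      set k := ω.length with hk
      -- k ≤ M s t when M s t ≠ 0
      have hkM : M s t = 0 ∨ k ≤ M s t := by
        by_cases hM0 : M s t = 0
        · exact Or.inl hM0
        · right
          by_contra hgt
          exact cs.not_isReduced_alternatingWord s t hM0 (by omega) (hω ▸ hred)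
      -- k ≠ M s t when M s t ≠ 0  (via braid relation and hlen)
      have hkM' : M s t = 0 ∨ k + 1 ≤ M s t := by
        rcases hkM with hM0 | hle
        · exact Or.inl hM0
        right
        rcases Nat.lt_or_ge k (M s t) with h | h
        · omega
        · exfalso
          have hkeq : k = M s t := by omega
          -- π ω = π (alt t s (M s t)); times σ s shortens
          obtain ⟨j, hj⟩ : ∃ j, M s t = j + 1 := ⟨M s t - 1, by omega⟩
          have hbraid : cs.wordProd (alternatingWord s t (M s t))
              = cs.wordProd (alternatingWord t s (M s t)) := by
            have := cs.wordProd_braidWord_eq s t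
            unfold CoxeterSystem.braidWord at this
            rw [M.symmetric t s] at this
            exact this
          have hshort : cs.wordProd ω * cs.simple s
              = cs.wordProd (alternatingWord s t j) := by
            rw [hω, hkeq, hbraid, hj, alternatingWord_succ,
              CoxeterSystem.wordProd_concat, mul_assoc,
              CoxeterSystem.simple_mul_simple_self, mul_one]
          have h1 := cs.length_wordProd_le (alternatingWord s t j)
          rw [CoxeterSystem.length_alternatingWord] at h1
          rw [show M.simple s = cs.simple s from rfl, hshort] at hlen
          omega
      -- coefficients
      have hcoef := rho_altWord M ρ hρ hst k
      rw [← hcs, ← hω] at hcoef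
      have hu1 : 0 ≤ useq (pairing M s t) k :=
        useq_pairing_nonneg M ρ hρ hst (by rcases hkM' with h|h; exact Or.inl h; exact Or.inr (by omega))
      have hu2 : 0 ≤ useq (pairing M s t) (k+1) :=
        useq_pairing_nonneg M ρ hρ hst hkM'
      by_cases hke : Even k
      · rw [if_pos hke] at hcoef
        exact ⟨_, _, hu2, hu1, hcoef⟩
      · rw [if_neg hke] at hcoef
        exact ⟨_, _, hu1, hu2, hcoef⟩
    · -- ω = alt t s k, ends with s : contradiction with hlen
      exfalso
      obtain ⟨j, hj⟩ : ∃ j, ω.length = j + 1 := ⟨ω.length - 1, by omega⟩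
      have hshort : cs.wordProd ω * cs.simple s = cs.wordProd (alternatingWord s t j) := by
        rw [hω, hj, alternatingWord_succ, CoxeterSystem.wordProd_concat, mul_assoc,
          CoxeterSystem.simple_mul_simple_self, mul_one]
      have h1 := cs.length_wordProd_le (alternatingWord s t j)
      rw [CoxeterSystem.length_alternatingWord] at h1
      rw [show M.simple s = cs.simple s from rfl, hshort] at hlen
      omega

end Aux4

section Fact1

set_option linter.unusedSectionVars false
set_option linter.unusedVariables false

open CoxeterSystem

variable [DecidableEq B] [Fintype B] (M : CoxeterMatrix B)
  (ρ : M.Group →* Module.End ℝ (B → ℝ))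
  (hρ : ∀ (s : B) (v : B → ℝ),
      ρ (M.simple s) v = v - (2 * form M v (sroot s)) • sroot s)

include hρ

lemma fact1 : ∀ (n : ℕ) (u : M.Group) (s : B), M.toCoxeterSystem.length u = n →
    M.toCoxeterSystem.length (u * M.simple s) = n + 1 → IsPos (ρ u (sroot s)) := by
  set cs := M.toCoxeterSystem with hcs
  intro n
  induction n using Nat.strong_induction_on with
  | _ n ih =>
    intro u s hn hlen
    replace hlen : cs.length (u * cs.simple s) = n + 1 := hlen
    by_cases hu1 : u = 1
    · subst hu1
      rw [map_one]
      intro x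
      show (0:ℝ) ≤ sroot s x
      rw [sroot, Pi.single_apply]
      split_ifs <;> norm_num
    · -- choose a right descent t of u
      obtain ⟨t, ht⟩ := cs.exists_rightDescent_of_ne_one hu1
      have htlt : cs.length (u * cs.simple t) < cs.length u := ht
      have hst : s ≠ t := by
        intro h
        rw [h] at hlen
        omega
      -- the minimal coset representative
      set S : Set ℕ := {m | ∃ v : M.Group, ∃ ω : List B, (∀ x ∈ ω, x = s ∨ x = t) ∧
        u = v * cs.wordProd ω ∧ cs.length u = cs.length v + ω.length ∧
        cs.length v = m} with hS
      have hSne : (cs.length u) ∈ S := by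
        exact ⟨u, [], by simp, by simp [CoxeterSystem.wordProd_nil], by simp, rfl⟩
      obtain ⟨v, ω, hmem, hueq, hsum, hvlen⟩ := Nat.sInf_mem ⟨_, hSne⟩
      have hmin : ∀ m, m < sInf S → m ∉ S := fun m hm => Nat.notMem_of_lt_sInf hm
      -- v has no descent at s or t
      have hvs : cs.length (v * cs.simple s) = cs.length v + 1 := by
        rcases cs.length_mul_simple v s with h | h
        · exact h
        · exfalso
          have hne := cs.length_mul_simple_ne v s
          apply hmin (cs.length v - 1) (by omega)
          refine ⟨v * cs.simple s, s :: ω, ?_, ?_, ?_, by omega⟩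
          · intro x hx
            rcases List.mem_cons.mp hx with rfl | hx'
            · exact Or.inl rfl
            · exact hmem x hx'
          · rw [CoxeterSystem.wordProd_cons, ← mul_assoc,
              CoxeterSystem.simple_mul_simple_cancel_right]
            exact hueq
          · simp only [List.length_cons]
            omega
      have hvt : cs.length (v * cs.simple t) = cs.length v + 1 := by
        rcases cs.length_mul_simple v t with h | h
        · exact h
        · exfalso
          have hne := cs.length_mul_simple_ne v t
          apply hmin (cs.length v - 1) (by omega)
          refine ⟨v * cs.simple t, t :: ω, ?_, ?_, ?_, by omega⟩
          · intro x hx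
            rcases List.mem_cons.mp hx with rfl | hx'
            · exact Or.inr rfl
            · exact hmem x hx'
          · rw [CoxeterSystem.wordProd_cons, ← mul_assoc,
              CoxeterSystem.simple_mul_simple_cancel_right]
            exact hueq
          · simp only [List.length_cons]
            omega
      -- ℓ v < ℓ u
      have hvlt : cs.length v < cs.length u := by
        have h1 : cs.length (u * cs.simple t) ∈ S := by
          refine ⟨u * cs.simple t, [t], ?_, ?_, ?_, rfl⟩
          · intro x hx
            rcases List.mem_cons.mp hx with rfl | hx'
            · exact Or.inr rfl
            · simp at hx'
          · have h2 : cs.wordProd [t] = cs.simple t := by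
              simp [CoxeterSystem.wordProd_cons]
            rw [h2, CoxeterSystem.simple_mul_simple_cancel_right]
          · rcases cs.length_mul_simple u t with h | h
            · omega
            · have hne := cs.length_mul_simple_ne u t
              simp only [List.length_singleton]
              omega
        have := Nat.sInf_le h1
        omega
      -- ω is reduced
      have hred : cs.IsReduced ω := by
        have h1 : cs.length u ≤ cs.length v + cs.length (cs.wordProd ω) := by
          rw [hueq]
          exact cs.length_mul_le v (cs.wordProd ω)
        have h2 := cs.length_wordProd_le ω
        show cs.length (cs.wordProd ω) = ω.length
        omega
      -- ℓ(πω · σs) = ℓ(πω) + 1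
      have hωs : cs.length (cs.wordProd ω * cs.simple s)
          = cs.length (cs.wordProd ω) + 1 := by
        have h1 : cs.length (u * cs.simple s)
            ≤ cs.length v + cs.length (cs.wordProd ω * cs.simple s) := by
          rw [hueq, mul_assoc]
          exact cs.length_mul_le v (cs.wordProd ω * cs.simple s)
        have h2 : cs.length (cs.wordProd ω * cs.simple s)
            ≤ cs.length (cs.wordProd ω) + 1 := by
          have h3 := cs.length_mul_le (cs.wordProd ω) (cs.simple s)
          have hls : cs.length (cs.simple s) = 1 := cs.length_simple s
          omega
        have hredl : cs.length (cs.wordProd ω) = ω.length := hred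
        omega
      -- dihedral lemma
      obtain ⟨a, b, ha, hb, hab⟩ := dihedral_lemma M ρ hρ hst ω hmem hred hωs
      -- induction hypothesis applied to v
      have hposs : IsPos (ρ v (sroot s)) :=
        ih (cs.length v) (by omega) v s rfl hvs
      have hpost : IsPos (ρ v (sroot t)) :=
        ih (cs.length v) (by omega) v t rfl hvt
      -- conclude
      have hconc : ρ u (sroot s) = a • ρ v (sroot s) + b • ρ v (sroot t) := by
        rw [hueq, rho_mul_apply, hab, map_add, map_smul, map_smul]
      rw [hconc]
      intro x
      have h1 := hposs x
      have h2 := hpost x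
      simp only [Pi.add_apply, Pi.smul_apply, smul_eq_mul]
      nlinarith

end Fact1

section Depth

set_option linter.unusedSectionVars false
set_option linter.unusedVariables false

open CoxeterSystem

variable [DecidableEq B] [Fintype B] (M : CoxeterMatrix B)
  (ρ : M.Group →* Module.End ℝ (B → ℝ))
  (hρ : ∀ (s : B) (v : B → ℝ),
      ρ (M.simple s) v = v - (2 * form M v (sroot s)) • sroot s)

include hρ

lemma dset_nonempty {lam : B → ℝ} (hlam : IsRoot M ρ lam) :
    ∃ n, n ∈ {n | ∃ w : M.Group, IsNeg (ρ w⁻¹ lam) ∧ M.toCoxeterSystem.length w = n} := by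
  obtain ⟨w, s, hws⟩ := hlam
  refine ⟨M.toCoxeterSystem.length (w * M.simple s), w * M.simple s, ?_, rfl⟩
  have h1 : ρ (w * M.simple s)⁻¹ lam = ρ (M.simple s) (sroot s) := by
    rw [← hws, mul_inv_rev, rho_mul_apply, rho_inv_apply,
      show (M.simple s)⁻¹ = M.simple s from M.toCoxeterSystem.inv_simple s]
  rw [h1, rho_simple_sroot_self M ρ hρ]
  intro x
  rw [Pi.neg_apply, sroot, Pi.single_apply]
  split_ifs <;> norm_num

lemma depth_subadd {lam : B → ℝ} (hlam : IsRoot M ρ lam) (w' : M.Group) :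
    depth M ρ (ρ w' lam) ≤ M.toCoxeterSystem.length w' + depth M ρ lam := by
  obtain ⟨w₀, hneg, hw₀⟩ := Nat.sInf_mem (dset_nonempty M ρ hρ hlam)
  have hmem : M.toCoxeterSystem.length (w' * w₀) ∈
      {n | ∃ w : M.Group, IsNeg (ρ w⁻¹ (ρ w' lam)) ∧ M.toCoxeterSystem.length w = n} := by
    refine ⟨w' * w₀, ?_, rfl⟩
    have : ρ (w' * w₀)⁻¹ (ρ w' lam) = ρ w₀⁻¹ lam := by
      rw [mul_inv_rev, rho_mul_apply, rho_inv_apply]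
    rwa [this]
  have h1 : depth M ρ (ρ w' lam) ≤ M.toCoxeterSystem.length (w' * w₀) := Nat.sInf_le hmem
  have h2 := M.toCoxeterSystem.length_mul_le w' w₀
  rw [show sInf {n | ∃ w : M.Group, IsNeg (ρ w⁻¹ lam) ∧ M.toCoxeterSystem.length w = n}
    = depth M ρ lam from rfl] at hw₀
  omega

lemma depth_sign {lam : B → ℝ} (hlam : IsRoot M ρ lam) (s : B)
    (hpos : 0 < form M lam (sroot s)) :
    depth M ρ (ρ (M.simple s) lam) ≤ depth M ρ lam := by
  obtain ⟨w₀, hneg, hw₀⟩ := Nat.sInf_mem (dset_nonempty M ρ hρ hlam)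
  have hw₀' : M.toCoxeterSystem.length w₀ = depth M ρ lam := hw₀
  rcases M.toCoxeterSystem.length_simple_mul w₀ s with h | h
  · -- ℓ(σs w₀) = ℓ w₀ + 1 : use Fact 1
    have hfact : IsPos (ρ w₀⁻¹ (sroot s)) := by
      apply fact1 M ρ hρ (M.toCoxeterSystem.length w₀⁻¹) w₀⁻¹ s rfl
      have h1 : w₀⁻¹ * M.simple s = (M.toCoxeterSystem.simple s * w₀)⁻¹ := by
        rw [mul_inv_rev, show (M.toCoxeterSystem.simple s)⁻¹ = M.toCoxeterSystem.simple s
          from M.toCoxeterSystem.inv_simple s]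
        rfl
      rw [h1, M.toCoxeterSystem.length_inv, M.toCoxeterSystem.length_inv, h]
    have hmem : M.toCoxeterSystem.length w₀ ∈
        {n | ∃ w : M.Group, IsNeg (ρ w⁻¹ (ρ (M.simple s) lam)) ∧
          M.toCoxeterSystem.length w = n} := by
      refine ⟨w₀, ?_, rfl⟩
      intro x
      rw [hρ, map_sub, map_smul]
      have h1 := hneg x
      have h2 := hfact x
      simp only [Pi.sub_apply, Pi.smul_apply, smul_eq_mul]
      nlinarith
    have hle : depth M ρ (ρ (M.simple s) lam) ≤ M.toCoxeterSystem.length w₀ :=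
      Nat.sInf_le hmem
    omega
  · -- ℓ(σs w₀) = ℓ w₀ - 1 : direct witness
    have hne := M.toCoxeterSystem.length_simple_mul_ne w₀ s
    have hmem : M.toCoxeterSystem.length (M.toCoxeterSystem.simple s * w₀) ∈
        {n | ∃ w : M.Group, IsNeg (ρ w⁻¹ (ρ (M.simple s) lam)) ∧
          M.toCoxeterSystem.length w = n} := by
      refine ⟨M.toCoxeterSystem.simple s * w₀, ?_, rfl⟩
      have h1 : ρ (M.toCoxeterSystem.simple s * w₀)⁻¹ (ρ (M.simple s) lam)
          = ρ w₀⁻¹ lam := by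
        rw [mul_inv_rev, rho_mul_apply,
          show (M.toCoxeterSystem.simple s)⁻¹ = M.toCoxeterSystem.simple s
            from M.toCoxeterSystem.inv_simple s,
          show ρ (M.toCoxeterSystem.simple s) (ρ (M.simple s) lam)
              = ρ (M.toCoxeterSystem.simple s * M.simple s) lam
            from (rho_mul_apply M ρ _ _ _).symm,
          show M.toCoxeterSystem.simple s * M.simple s = 1
            from M.toCoxeterSystem.simple_mul_simple_self s, map_one]
        rfl
      rwa [h1]
    have hle : depth M ρ (ρ (M.simple s) lam)
        ≤ M.toCoxeterSystem.length (M.toCoxeterSystem.simple s * w₀) :=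
      Nat.sInf_le hmem
    omega

lemma depth_step {lam : B → ℝ} (hlam : IsRoot M ρ lam) (s : B)
    (hdp : depth M ρ (ρ (M.simple s) lam) = depth M ρ lam + 1) :
    ∀ x, lam x ≤ (ρ (M.simple s) lam) x := by
  have hK : form M lam (sroot s) ≤ 0 := by
    by_contra hc
    push_neg at hc
    have := depth_sign M ρ hρ hlam s hc
    omega
  intro x
  rw [hρ]
  simp only [Pi.sub_apply, Pi.smul_apply, smul_eq_mul]
  have h1 : (0:ℝ) ≤ sroot s x := by
    rw [sroot, Pi.single_apply]; split_ifs <;> norm_num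
  nlinarith

lemma main_aux : ∀ (n : ℕ) (w : M.Group) (lam : B → ℝ), IsRoot M ρ lam →
    M.toCoxeterSystem.length w = n →
    depth M ρ (ρ w lam) = n + depth M ρ lam →
    ∀ x, lam x ≤ (ρ w lam) x := by
  intro n
  induction n using Nat.strong_induction_on with
  | _ n ih =>
    intro w lam hlam hn hdp
    by_cases hn0 : n = 0
    · subst hn0
      have hw1 : w = 1 := M.toCoxeterSystem.length_eq_zero_iff.mp hn
      subst hw1
      rw [map_one]
      intro x
      exact le_refl _
    · have hw1 : w ≠ 1 := by
        intro h
        rw [h, M.toCoxeterSystem.length_one] at hn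
        omega
      obtain ⟨s, hs⟩ := M.toCoxeterSystem.exists_leftDescent_of_ne_one hw1
      have hslt : M.toCoxeterSystem.length (M.toCoxeterSystem.simple s * w)
          < M.toCoxeterSystem.length w := hs
      have hw'len : M.toCoxeterSystem.length (M.toCoxeterSystem.simple s * w) = n - 1 := by
        rcases M.toCoxeterSystem.length_simple_mul w s with h | h
        · omega
        · omega
      have hwdec : w = M.simple s * (M.toCoxeterSystem.simple s * w) := by
        rw [← mul_assoc,
          show M.simple s * M.toCoxeterSystem.simple s = 1
            from M.toCoxeterSystem.simple_mul_simple_self s, one_mul]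
      have hnuroot : IsRoot M ρ (ρ (M.toCoxeterSystem.simple s * w) lam) := by
        obtain ⟨v, x, hv⟩ := hlam
        exact ⟨(M.toCoxeterSystem.simple s * w) * v, x, by rw [rho_mul_apply, hv]⟩
      have hwlam : ρ w lam = ρ (M.simple s) (ρ (M.toCoxeterSystem.simple s * w) lam) := by
        rw [← rho_mul_apply, ← hwdec]
      have h1 : depth M ρ (ρ (M.toCoxeterSystem.simple s * w) lam)
          ≤ (n-1) + depth M ρ lam := by
        have := depth_subadd M ρ hρ hlam (M.toCoxeterSystem.simple s * w)
        omega
      have h2 : depth M ρ (ρ (M.simple s) (ρ (M.toCoxeterSystem.simple s * w) lam))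
          ≤ depth M ρ (ρ (M.toCoxeterSystem.simple s * w) lam) + 1 := by
        have := depth_subadd M ρ hρ hnuroot (M.simple s)
        have hls : M.toCoxeterSystem.length (M.simple s) = 1 :=
          M.toCoxeterSystem.length_simple s
        omega
      rw [hwlam] at hdp
      have hnu_dp : depth M ρ (ρ (M.toCoxeterSystem.simple s * w) lam)
          = (n-1) + depth M ρ lam := by omega
      have hstep_dp : depth M ρ (ρ (M.simple s) (ρ (M.toCoxeterSystem.simple s * w) lam))
          = depth M ρ (ρ (M.toCoxeterSystem.simple s * w) lam) + 1 := by omega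
      have hih := ih (n-1) (by omega) (M.toCoxeterSystem.simple s * w) lam hlam hw'len hnu_dp
      have hst := depth_step M ρ hρ hnuroot s hstep_dp
      intro x
      calc lam x ≤ (ρ (M.toCoxeterSystem.simple s * w) lam) x := hih x
        _ ≤ (ρ (M.simple s) (ρ (M.toCoxeterSystem.simple s * w) lam)) x := hst x
        _ = (ρ w lam) x := by rw [hwlam]

end Depth

theorem statement7 [DecidableEq B] [Fintype B] (M : CoxeterMatrix B)
    (ρ : M.Group →* Module.End ℝ (B → ℝ))
    (hρ : ∀ (s : B) (v : B → ℝ),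
      ρ (M.simple s) v = v - (2 * form M v (sroot s)) • sroot s)
    (lam mu : B → ℝ) (hlam : IsPosRoot M ρ lam) (hmu : IsPosRoot M ρ mu)
    (hle : PLE M ρ lam mu) :
    ∀ s : B, lam s ≤ mu s := by
  obtain ⟨w, hmueq, hdp⟩ := hle
  have hdp' : depth M ρ (ρ w lam) = M.toCoxeterSystem.length w + depth M ρ lam := by
    rw [← hmueq]
    exact hdp
  have h := main_aux M ρ hρ (M.toCoxeterSystem.length w) w lam hlam.1 rfl hdp'
  intro s
  rw [hmueq]
  exact h s
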